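/- Let E be the upper half of the ellipse x²/1 + y²/k² ≤ 1 with 0 < k < 1, i.e., its intersection with the closed upper half-plane, and let a = (−1,0), b = (1,0). Then for any three points p, q, r on the elliptical arc (the upper boundary of E), listed in order of increasing x-coordinate, one has |pq| + |qr| − |pr| ≤ 2√(1 + k²) − 2. -/

import Mathlib

lemma chord_le (k : ℝ) (hk : 0 ≤ k) {x1 x3 t : ℝ}
    (h1 : x1^2 ≤ 1) (h3 : x3^2 ≤ 1) (ht0 : 0 ≤ t) (ht1 : t ≤ 1) :
    (1-t) * (k * Real.sqrt (1 - x1^2)) + t * (k * Real.sqrt (1 - x3^2))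
      ≤ k * Real.sqrt (1 - ((1-t)*x1 + t*x3)^2) := by
  set a := Real.sqrt (1 - x1^2) with ha
  set b := Real.sqrt (1 - x3^2) with hb
  have ha2 : a^2 = 1 - x1^2 := Real.sq_sqrt (by nlinarith)
  have hb2 : b^2 = 1 - x3^2 := Real.sq_sqrt (by nlinarith)
  have ha0 : 0 ≤ a := Real.sqrt_nonneg _
  have hb0 : 0 ≤ b := Real.sqrt_nonneg _
  have hL : 0 ≤ (1-t)*a + t*b := by
    have h1' : 0 ≤ (1-t)*a := mul_nonneg (by linarith) ha0
    have h2' : 0 ≤ t*b := mul_nonneg ht0 hb0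
    linarith
  have key : ((1-t)*a + t*b)^2 ≤ 1 - ((1-t)*x1 + t*x3)^2 := by
    nlinarith [mul_nonneg (mul_nonneg ht0 (by linarith : (0:ℝ) ≤ 1-t)) (sq_nonneg (x1-x3)),
      mul_nonneg (mul_nonneg ht0 (by linarith : (0:ℝ) ≤ 1-t)) (sq_nonneg (a-b))]
  have h2 : (1-t)*a + t*b ≤ Real.sqrt (1 - ((1-t)*x1 + t*x3)^2) := by
    rw [show ((1:ℝ)-t)*a + t*b = Real.sqrt (((1-t)*a + t*b)^2) from (Real.sqrt_sq hL).symm]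
    exact Real.sqrt_le_sqrt key
  calc (1-t) * (k * a) + t * (k * b) = k * ((1-t)*a + t*b) := by ring
    _ ≤ k * Real.sqrt (1 - ((1-t)*x1 + t*x3)^2) := mul_le_mul_of_nonneg_left h2 hk

lemma quadC (z1 z2 z3 z4 X : ℂ) (h13 : X ∈ segment ℝ z1 z3) (h24 : X ∈ segment ℝ z2 z4) :
    dist z1 z4 + dist z2 z3 ≤ dist z1 z3 + dist z2 z4 := by
  have e13 := dist_add_dist_of_mem_segment h13
  have e24 := dist_add_dist_of_mem_segment h24
  have t14 := dist_triangle z1 X z4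
  have t23 := dist_triangle z2 X z3
  linarith

noncomputable def arcPt (k x : ℝ) : ℂ := ⟨x, k * Real.sqrt (1 - x^2)⟩

@[simp] lemma arcPt_re (k x : ℝ) : (arcPt k x).re = x := rfl
@[simp] lemma arcPt_im (k x : ℝ) : (arcPt k x).im = k * Real.sqrt (1 - x^2) := rfl

lemma quad_arc (k : ℝ) (hk : 0 ≤ k) {x1 x2 x3 x4 : ℝ}
    (h1 : x1^2 ≤ 1) (h2 : x2^2 ≤ 1) (h3 : x3^2 ≤ 1) (h4 : x4^2 ≤ 1)
    (h12 : x1 ≤ x2) (h23 : x2 ≤ x3) (h34 : x3 ≤ x4) :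
    dist (arcPt k x1) (arcPt k x4) + dist (arcPt k x2) (arcPt k x3)
      ≤ dist (arcPt k x1) (arcPt k x3) + dist (arcPt k x2) (arcPt k x4) := by
  rcases eq_or_lt_of_le (le_trans h12 h23) with h13 | h13
  · have e2 : x2 = x1 := le_antisymm (h13 ▸ h23) h12
    rw [← h13, e2]
    simp [dist_comm]
  rcases eq_or_lt_of_le (le_trans h23 h34) with h24 | h24
  · have e3 : x3 = x4 := le_antisymm h34 (h24 ▸ h23)
    rw [h24, e3]
  set y1 := k * Real.sqrt (1 - x1^2) with hy1
  set y2 := k * Real.sqrt (1 - x2^2) with hy2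
  set y3 := k * Real.sqrt (1 - x3^2) with hy3
  set y4 := k * Real.sqrt (1 - x4^2) with hy4
  set l13 : ℝ → ℝ := fun x => y1 + (x - x1) * ((y3 - y1)/(x3 - x1)) with hl13
  set l24 : ℝ → ℝ := fun x => y2 + (x - x2) * ((y4 - y2)/(x4 - x2)) with hl24
  have h31 : x3 - x1 ≠ 0 := by linarith
  have h42 : x4 - x2 ≠ 0 := by linarith
  -- chord below graph at x2 (for the 1-3 chord)
  have chord13 : l13 x2 ≤ y2 := by
    set t := (x2 - x1)/(x3 - x1) with hT
    have ht0 : 0 ≤ t := div_nonneg (by linarith) (by linarith)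
    have ht1 : t ≤ 1 := (div_le_one (by linarith)).mpr (by linarith)
    have hx : (1-t)*x1 + t*x3 = x2 := by rw [hT]; field_simp; ring
    have hl : l13 x2 = (1-t)*y1 + t*y3 := by
      simp only [hl13, hT]; field_simp; ring
    rw [hl, hy2, ← hx]
    exact chord_le k hk h1 h3 ht0 ht1
  -- chord below graph at x3 (for the 2-4 chord)
  have chord24 : l24 x3 ≤ y3 := by
    set t := (x3 - x2)/(x4 - x2) with hT
    have ht0 : 0 ≤ t := div_nonneg (by linarith) (by linarith)
    have ht1 : t ≤ 1 := (div_le_one (by linarith)).mpr (by linarith)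
    have hx : (1-t)*x2 + t*x4 = x3 := by rw [hT]; field_simp; ring
    have hl : l24 x3 = (1-t)*y2 + t*y4 := by
      simp only [hl24, hT]; field_simp; ring
    rw [hl, hy3, ← hx]
    exact chord_le k hk h2 h4 ht0 ht1
  set φ : ℝ → ℝ := fun x => l13 x - l24 x with hφ
  have hφ2 : φ x2 ≤ 0 := by
    have : l24 x2 = y2 := by simp [hl24]
    simp only [hφ, this]
    linarith
  have hφ3 : 0 ≤ φ x3 := by
    have : l13 x3 = y3 := by simp only [hl13]; field_simp; ring
    simp only [hφ, this]
    linarith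
  have hc : ContinuousOn φ (Set.Icc x2 x3) := by
    apply Continuous.continuousOn
    simp only [hφ, hl13, hl24]
    fun_prop
  obtain ⟨xs, hxs, hφs⟩ := intermediate_value_Icc h23 hc ⟨hφ2, hφ3⟩
  have hxs2 : x2 ≤ xs := hxs.1
  have hxs3 : xs ≤ x3 := hxs.2
  have hls : l13 xs = l24 xs := by
    have := hφs
    simp only [hφ] at this
    linarith
  set X : ℂ := ⟨xs, l13 xs⟩ with hX
  have mem13 : X ∈ segment ℝ (arcPt k x1) (arcPt k x3) := by
    set t := (xs - x1)/(x3 - x1) with hT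
    refine ⟨1 - t, t, ?_, ?_, by ring, ?_⟩
    · have : t ≤ 1 := (div_le_one (by linarith)).mpr (by linarith)
      linarith
    · exact div_nonneg (by linarith) (by linarith)
    · apply Complex.ext
      · simp only [Complex.add_re, Complex.real_smul, Complex.mul_re,
          Complex.ofReal_re, Complex.ofReal_im, arcPt_re, arcPt_im, hX, hT]
        field_simp
        ring
      · simp only [Complex.add_im, Complex.real_smul, Complex.mul_im,
          Complex.ofReal_re, Complex.ofReal_im, arcPt_re, arcPt_im, hX, hT,
          hl13, ← hy1, ← hy3]
        field_simp
        ring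
  have mem24 : X ∈ segment ℝ (arcPt k x2) (arcPt k x4) := by
    set t := (xs - x2)/(x4 - x2) with hT
    refine ⟨1 - t, t, ?_, ?_, by ring, ?_⟩
    · have : t ≤ 1 := (div_le_one (by linarith)).mpr (by linarith)
      linarith
    · exact div_nonneg (by linarith) (by linarith)
    · apply Complex.ext
      · simp only [Complex.add_re, Complex.real_smul, Complex.mul_re,
          Complex.ofReal_re, Complex.ofReal_im, arcPt_re, arcPt_im, hX, hT]
        field_simp
        ring
      · simp only [Complex.add_im, Complex.real_smul, Complex.mul_im,
          Complex.ofReal_re, Complex.ofReal_im, arcPt_re, arcPt_im, hX, hT,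
          hls, hl24, ← hy2, ← hy4]
        field_simp
        ring
  exact quadC _ _ _ _ X mem13 mem24

lemma endpoint_bound (k v : ℝ) (hk : 0 ≤ k) (hv : v^2 ≤ 1) :
    dist (arcPt k (-1)) (arcPt k v) + dist (arcPt k v) (arcPt k 1)
      ≤ 2 * Real.sqrt (1 + k^2) := by
  have hw2 : (k * Real.sqrt (1 - v^2))^2 = k^2 * (1 - v^2) := by
    rw [mul_pow, Real.sq_sqrt (by linarith)]
  have h0 : Real.sqrt (1 - (-1:ℝ)^2) = 0 := by norm_num
  have h1 : Real.sqrt (1 - (1:ℝ)^2) = 0 := by norm_num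
  set P := (v+1)^2 + k^2*(1-v^2) with hPd
  set Q := (1-v)^2 + k^2*(1-v^2) with hQd
  have hP0 : 0 ≤ P := by nlinarith [sq_nonneg (v+1), sq_nonneg k]
  have hQ0 : 0 ≤ Q := by nlinarith [sq_nonneg (1-v), sq_nonneg k]
  have e1 : dist (arcPt k (-1)) (arcPt k v) = Real.sqrt P := by
    rw [Complex.dist_eq_re_im, arcPt_re, arcPt_im, arcPt_re, arcPt_im, h0]
    congr 1
    calc ((-1:ℝ) - v)^2 + (k*0 - k * Real.sqrt (1 - v^2))^2
        = (v+1)^2 + (k * Real.sqrt (1 - v^2))^2 := by ring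
      _ = P := by rw [hw2]
  have e2 : dist (arcPt k v) (arcPt k 1) = Real.sqrt Q := by
    rw [Complex.dist_eq_re_im, arcPt_re, arcPt_im, arcPt_re, arcPt_im, h1]
    congr 1
    calc (v - (1:ℝ))^2 + (k * Real.sqrt (1 - v^2) - k*0)^2
        = (1-v)^2 + (k * Real.sqrt (1 - v^2))^2 := by ring
      _ = Q := by rw [hw2]
  rw [e1, e2]
  set dP := Real.sqrt P with hdP
  set dQ := Real.sqrt Q with hdQ
  have hdP2 : dP^2 = P := Real.sq_sqrt hP0
  have hdQ2 : dQ^2 = Q := Real.sq_sqrt hQ0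
  have hdP0 : 0 ≤ dP := Real.sqrt_nonneg _
  have hdQ0 : 0 ≤ dQ := Real.sqrt_nonneg _
  set M := (1-v^2) + k^2*(1+v^2) with hMd
  have hM0 : 0 ≤ M := by nlinarith [sq_nonneg k, sq_nonneg (k*v)]
  have hPQ : P*Q ≤ M^2 := by nlinarith [sq_nonneg (k^2*v)]
  have hcross : dP * dQ ≤ M := by
    rw [hdP, hdQ, ← Real.sqrt_mul hP0]
    calc Real.sqrt (P*Q) ≤ Real.sqrt (M^2) := Real.sqrt_le_sqrt hPQ
      _ = M := Real.sqrt_sq hM0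
  set S := Real.sqrt (1 + k^2) with hSd
  have hS2 : S^2 = 1 + k^2 := Real.sq_sqrt (by positivity)
  have hS0 : 0 ≤ S := Real.sqrt_nonneg _
  have hsum : (dP + dQ)^2 ≤ (2*S)^2 := by nlinarith [hdP2, hdQ2, hcross, hS2]
  have hfin := Real.sqrt_le_sqrt hsum
  rwa [Real.sqrt_sq (by positivity), Real.sqrt_sq (by positivity)] at hfin

lemma coord (k : ℝ) (hk : 0 < k) {x y : ℝ} (h : x^2 + y^2/k^2 = 1) (hy : 0 ≤ y) :
    y = k * Real.sqrt (1 - x^2) ∧ x^2 ≤ 1 := by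
  have hk2 : (0:ℝ) < k^2 := by positivity
  have h2 : y^2 = k^2 * (1 - x^2) := by
    field_simp at h
    nlinarith [h]
  have hx : x^2 ≤ 1 := by nlinarith [sq_nonneg y]
  refine ⟨?_, hx⟩
  calc y = Real.sqrt (y^2) := (Real.sqrt_sq hy).symm
    _ = Real.sqrt (k^2 * (1 - x^2)) := by rw [h2]
    _ = k * Real.sqrt (1 - x^2) := by
        rw [Real.sqrt_mul (by positivity), Real.sqrt_sq hk.le]

/-- For three points `p, q, r` on the upper half of the ellipse `x² + y²/k² = 1`
(`0 < k < 1`), listed in order of increasing `x`-coordinate,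
`|pq| + |qr| − |pr| ≤ 2√(1 + k²) − 2`. -/
theorem stmt9 (k : ℝ) (hk0 : 0 < k) (hk1 : k < 1)
    (p q r : EuclideanSpace ℝ (Fin 2))
    (hp : (p 0) ^ 2 + (p 1) ^ 2 / k ^ 2 = 1) (hp' : 0 ≤ p 1)
    (hq : (q 0) ^ 2 + (q 1) ^ 2 / k ^ 2 = 1) (hq' : 0 ≤ q 1)
    (hr : (r 0) ^ 2 + (r 1) ^ 2 / k ^ 2 = 1) (hr' : 0 ≤ r 1)
    (hpq : p 0 ≤ q 0) (hqr : q 0 ≤ r 0) :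
    dist p q + dist q r - dist p r ≤ 2 * Real.sqrt (1 + k ^ 2) - 2 := by
  obtain ⟨hp1, hp0⟩ := coord k hk0 hp hp'
  obtain ⟨hq1, hq0⟩ := coord k hk0 hq hq'
  obtain ⟨hr1, hr0⟩ := coord k hk0 hr hr'
  have hdist : ∀ (a b : EuclideanSpace ℝ (Fin 2)),
      a 1 = k * Real.sqrt (1 - (a 0)^2) → b 1 = k * Real.sqrt (1 - (b 0)^2) →
      dist a b = dist (arcPt k (a 0)) (arcPt k (b 0)) := by
    intro a b ha hb
    rw [EuclideanSpace.dist_eq, Complex.dist_eq_re_im, arcPt_re, arcPt_im,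
      arcPt_re, arcPt_im, Fin.sum_univ_two, ← ha, ← hb]
    congr 1
    rw [Real.dist_eq, Real.dist_eq, sq_abs, sq_abs]
  have dpq := hdist p q hp1 hq1
  have dqr := hdist q r hq1 hr1
  have dpr := hdist p r hp1 hr1
  have hm1 : ((-1:ℝ))^2 ≤ 1 := by norm_num
  have hp1' : ((1:ℝ))^2 ≤ 1 := by norm_num
  have hpm : (-1:ℝ) ≤ p 0 := by nlinarith [hp0]
  have hqm : (-1:ℝ) ≤ q 0 := by nlinarith [hq0]
  have hr1'' : r 0 ≤ 1 := by nlinarith [hr0]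
  have quad1 := quad_arc k hk0.le hm1 hp0 hq0 hr0 hpm hpq hqr
  have quad2 := quad_arc k hk0.le hm1 hq0 hr0 hp1' hqm hqr hr1''
  have hend := endpoint_bound k (q 0) hk0.le hq0
  have hab : dist (arcPt k (-1)) (arcPt k 1) = 2 := by
    rw [Complex.dist_eq_re_im, arcPt_re, arcPt_im, arcPt_re, arcPt_im]
    have : ((-1:ℝ) - 1)^2 + (k * Real.sqrt (1-(-1:ℝ)^2) - k * Real.sqrt (1-(1:ℝ)^2))^2 = 4 := by
      norm_num
    rw [this, show (4:ℝ) = 2^2 by norm_num, Real.sqrt_sq (by norm_num)]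
  rw [dpq, dqr, dpr]
  linarith
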